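/- For s ∈ (0,1/2), the shifted partial integral satisfies lim_{s→0⁺} ( ∫_s^{1/2} (u·(u−s)·(1−u))^{−1/2} du + log s ) = c, where c = ∫₀^{1/2} t^{−1}·((1−t)^{−1/2} − 1) dt + ∫₁^∞ t^{−1/2}·((t−1)^{−1/2} − t^{−1/2}) dt − log 2; both integrals defining c are finite. -/

import Mathlib

open MeasureTheory Set Real Filter Topology

lemma rpow_neg_half_eq {x : ℝ} (hx : 0 ≤ x) : x ^ (-(1/2:ℝ)) = (Real.sqrt x)⁻¹ := by
  rw [Real.rpow_neg hx, Real.sqrt_eq_rpow]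

lemma key_ineq {u : ℝ} (hu0 : 0 < u) (hu2 : u ≤ 1/2) :
    (1 - u) ^ (-(1/2:ℝ)) ≤ 1 + u := by
  have h1u : (0:ℝ) < 1 - u := by linarith
  rw [rpow_neg_half_eq h1u.le]
  have ha0 : 0 < Real.sqrt (1 - u) := Real.sqrt_pos.mpr h1u
  have ha2 : Real.sqrt (1 - u) ^ 2 = 1 - u := Real.sq_sqrt h1u.le
  rw [inv_eq_one_div, div_le_iff₀ ha0]
  have he : ((1+u) * Real.sqrt (1 - u)) ^ 2 = (1+u)^2 * (1-u) := by rw [mul_pow, ha2]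
  have hx2 : 1 ≤ ((1+u) * Real.sqrt (1 - u)) ^ 2 := by
    rw [he]
    nlinarith [mul_nonneg hu0.le (by linarith : (0:ℝ) ≤ 1/2 - u),
      mul_nonneg (mul_nonneg hu0.le hu0.le) (by linarith : (0:ℝ) ≤ 1/2 - u)]
  have h1x : (0:ℝ) < 1 + (1+u) * Real.sqrt (1 - u) := by positivity
  nlinarith [hx2, h1x]

lemma one_le_fac {u : ℝ} (hu0 : 0 < u) (hu1 : u < 1) : 1 ≤ (1 - u) ^ (-(1/2:ℝ)) :=
  Real.one_le_rpow_of_pos_of_le_one_of_nonpos (by linarith) (by linarith) (by norm_num)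

lemma int1 : IntegrableOn (fun t : ℝ => t⁻¹ * ((1 - t) ^ (-(1/2 : ℝ)) - 1)) (Ioo (0:ℝ) (1/2)) := by
  have hconst : IntegrableOn (fun _ : ℝ => (1:ℝ)) (Ioo (0:ℝ) (1/2)) := by
    refine (integrableOn_const_iff (C := (1:ℝ))).mpr (Or.inr ?_)
    simp [Real.volume_Ioo]
  refine hconst.mono' ?_ ?_
  · exact (by fun_prop : Measurable (fun t : ℝ => t⁻¹ * ((1 - t) ^ (-(1/2 : ℝ)) - 1))).aestronglyMeasurable
  · filter_upwards [ae_restrict_mem measurableSet_Ioo] with t ht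
    have ht0 := ht.1
    have ht2 : t ≤ 1/2 := ht.2.le
    have h1 : 1 ≤ (1-t) ^ (-(1/2:ℝ)) := one_le_fac ht0 (by linarith)
    have h2 : (1-t) ^ (-(1/2:ℝ)) ≤ 1 + t := key_ineq ht0 ht2
    rw [Real.norm_eq_abs, abs_of_nonneg (mul_nonneg (inv_nonneg.mpr ht0.le) (by linarith))]
    calc t⁻¹ * ((1 - t) ^ (-(1/2 : ℝ)) - 1) ≤ t⁻¹ * t := by
          apply mul_le_mul_of_nonneg_left (by linarith) (by positivity)
      _ = 1 := inv_mul_cancel₀ ht0.ne'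

-- integrability of (x - c)^(-1/2) on Ioo c d
lemma int_shift_rpow (c d : ℝ) (h : c ≤ d) :
    IntegrableOn (fun x : ℝ => (x - c) ^ (-(1/2:ℝ))) (Ioo c d) := by
  have h1 : IntervalIntegrable (fun x : ℝ => x ^ (-(1/2:ℝ))) volume (c - c) (d - c) :=
    intervalIntegral.intervalIntegrable_rpow' (by norm_num)
  have h2 := (h1.comp_sub_right c)
  simp only [sub_add_cancel] at h2
  exact (intervalIntegrable_iff_integrableOn_Ioo_of_le h).mp h2

lemma sqrt_bound {t : ℝ} (ht : 2 ≤ t) :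
    (Real.sqrt t)⁻¹ * ((Real.sqrt (t-1))⁻¹ - (Real.sqrt t)⁻¹) ≤ Real.sqrt 2 * t ^ (-(2:ℝ)) := by
  have ht0 : (0:ℝ) < t := by linarith
  set a := Real.sqrt t with hadef
  set b := Real.sqrt (t-1) with hbdef
  set c := Real.sqrt 2 with hcdef
  have ha0 : 0 < a := Real.sqrt_pos.mpr ht0
  have hb0 : 0 < b := Real.sqrt_pos.mpr (by linarith)
  have hc0 : 0 < c := Real.sqrt_pos.mpr (by norm_num)
  have ha2 : a ^ 2 = t := Real.sq_sqrt ht0.le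
  have hb2 : b ^ 2 = t - 1 := Real.sq_sqrt (by linarith)
  have hc2 : c ^ 2 = 2 := Real.sq_sqrt (by norm_num)
  have hrw : t ^ (-(2:ℝ)) = ((a^2)^2)⁻¹ := by
    rw [ha2, Real.rpow_neg ht0.le,
      show ((2:ℝ)) = ((2:ℕ):ℝ) by norm_num, Real.rpow_natCast]
  rw [hrw]
  have key : (a - b) * (a + b) = 1 := by nlinarith
  have hab : a ≤ c * b := by
    have hsq : a ^ 2 ≤ (c * b) ^ 2 := by rw [mul_pow]; nlinarith
    nlinarith [mul_pos hc0 hb0]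
  have e1 : a⁻¹ * (b⁻¹ - a⁻¹) = 1 / ((a+b) * a^2 * b) := by
    have hne : ((a+b) * a^2 * b) ≠ 0 := by positivity
    rw [eq_div_iff hne]
    field_simp
    linear_combination key
  have h2 : c * ((a^2)^2)⁻¹ = c / ((a^2)^2) := (div_eq_mul_inv c _).symm
  rw [e1, h2, div_le_div_iff₀ (by positivity) (by positivity)]
  nlinarith [mul_nonneg (pow_nonneg ha0.le 3) (sub_nonneg.mpr hab),
    mul_pos (mul_pos hc0 (mul_pos ha0 ha0)) (mul_pos hb0 hb0)]

lemma f2_nonneg {t : ℝ} (ht : 1 < t) :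
    0 ≤ t ^ (-(1/2:ℝ)) * ((t-1) ^ (-(1/2:ℝ)) - t ^ (-(1/2:ℝ))) := by
  have h1 : t ^ (-(1/2:ℝ)) ≤ (t-1) ^ (-(1/2:ℝ)) :=
    Real.rpow_le_rpow_of_nonpos (by linarith) (by linarith) (by norm_num)
  have h2 : (0:ℝ) ≤ t ^ (-(1/2:ℝ)) := Real.rpow_nonneg (by linarith) _
  nlinarith

lemma diff_le {t : ℝ} (ht : 1 < t) :
    t ^ (-(1/2:ℝ)) ≤ (t-1) ^ (-(1/2:ℝ)) :=
  Real.rpow_le_rpow_of_nonpos (by linarith) (by linarith) (by norm_num)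

lemma int2 : IntegrableOn
    (fun t : ℝ => t ^ (-(1/2 : ℝ)) * ((t - 1) ^ (-(1/2 : ℝ)) - t ^ (-(1/2 : ℝ)))) (Ioi 1) := by
  have hm : Measurable (fun t : ℝ => t ^ (-(1/2 : ℝ)) * ((t - 1) ^ (-(1/2 : ℝ)) - t ^ (-(1/2 : ℝ)))) := by
    fun_prop
  rw [← Set.Ioc_union_Ioi_eq_Ioi (by norm_num : (1:ℝ) ≤ 2)]
  refine IntegrableOn.union ?_ ?_
  · -- on Ioc 1 2
    have hdom : IntegrableOn (fun t : ℝ => (t - 1) ^ (-(1/2:ℝ)) + 1) (Ioc (1:ℝ) 2) := by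
      refine Integrable.add ?_ ((integrableOn_const_iff (C := (1:ℝ))).mpr (Or.inr (by simp)))
      exact (int_shift_rpow 1 2 (by norm_num)).congr_set_ae Ioo_ae_eq_Ioc.symm
    refine hdom.mono' hm.aestronglyMeasurable ?_
    filter_upwards [ae_restrict_mem measurableSet_Ioc] with t ht
    have ht1 : 1 < t := ht.1
    rw [Real.norm_eq_abs, abs_of_nonneg (f2_nonneg ht1)]
    have h1 : t ^ (-(1/2:ℝ)) ≤ 1 :=
      Real.rpow_le_one_of_one_le_of_nonpos ht1.le (by norm_num)
    have h2 : (0:ℝ) ≤ (t-1) ^ (-(1/2:ℝ)) - t ^ (-(1/2:ℝ)) := sub_nonneg.mpr (diff_le ht1)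
    have h3 : (0:ℝ) ≤ t ^ (-(1/2:ℝ)) := Real.rpow_nonneg (by linarith) _
    have h4 : (0:ℝ) ≤ (t-1) ^ (-(1/2:ℝ)) := Real.rpow_nonneg (by linarith) _
    nlinarith
  · -- on Ioi 2
    have hdom : IntegrableOn (fun t : ℝ => Real.sqrt 2 * t ^ (-(2:ℝ))) (Ioi (2:ℝ)) :=
      (integrableOn_Ioi_rpow_of_lt (by norm_num) (by norm_num)).const_mul _
    refine hdom.mono' hm.aestronglyMeasurable ?_
    filter_upwards [ae_restrict_mem measurableSet_Ioi] with t ht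
    have ht2 : (2:ℝ) ≤ t := le_of_lt ht
    have ht1 : (1:ℝ) < t := by linarith
    rw [Real.norm_eq_abs, abs_of_nonneg (f2_nonneg ht1),
      rpow_neg_half_eq (by linarith : (0:ℝ) ≤ t),
      rpow_neg_half_eq (by linarith : (0:ℝ) ≤ t - 1)]
    exact sqrt_bound ht2


noncomputable def φ : ℝ → ℝ := fun t => 2 * Real.log (Real.sqrt t + Real.sqrt (t-1)) - Real.log t

lemma phi_deriv {t : ℝ} (ht : 1 < t) :
    HasDerivAt φ (t ^ (-(1/2 : ℝ)) * ((t - 1) ^ (-(1/2 : ℝ)) - t ^ (-(1/2 : ℝ)))) t := by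
  have ht0 : (0:ℝ) < t := by linarith
  have ht1 : (0:ℝ) < t - 1 := by linarith
  have ha0 : 0 < Real.sqrt t := Real.sqrt_pos.mpr ht0
  have hb0 : 0 < Real.sqrt (t-1) := Real.sqrt_pos.mpr ht1
  have ha2 : Real.sqrt t ^ 2 = t := Real.sq_sqrt ht0.le
  have hb2 : Real.sqrt (t-1) ^ 2 = t - 1 := Real.sq_sqrt ht1.le
  have h1 : HasDerivAt (fun x : ℝ => Real.sqrt x) (1/(2*Real.sqrt t)) t :=
    Real.hasDerivAt_sqrt ht0.ne'
  have h2 : HasDerivAt (fun x : ℝ => Real.sqrt (x-1)) (1/(2*Real.sqrt (t-1))) t := by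
    have := (Real.hasDerivAt_sqrt ht1.ne').comp t ((hasDerivAt_id t).sub_const 1)
    simpa [Function.comp_def] using this
  have hsum := h1.add h2
  have hne : Real.sqrt t + Real.sqrt (t-1) ≠ 0 := by positivity
  have hlog := (hsum.log hne).const_mul 2
  have hlogt := Real.hasDerivAt_log ht0.ne'
  have hφ := hlog.sub hlogt
  refine hφ.congr_deriv ?_
  symm
  simp only [Pi.add_apply]
  rw [rpow_neg_half_eq ht0.le, rpow_neg_half_eq ht1.le]
  rw [show t⁻¹ = ((Real.sqrt t)^2)⁻¹ by rw [ha2]]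
  field_simp
  ring

lemma phi_tendsto : Tendsto φ atTop (𝓝 (2 * Real.log 2)) := by
  have l0 : Tendsto (fun t : ℝ => 1 - 1/t) atTop (𝓝 1) := by
    have h1 : Tendsto (fun t : ℝ => 1/t) atTop (𝓝 (0:ℝ)) := by
      simpa [one_div] using tendsto_inv_atTop_zero (𝕜 := ℝ)
    have h2 := (tendsto_const_nhds (x := (1:ℝ)) (f := (atTop : Filter ℝ))).sub h1
    simpa using h2
  have l1 : Tendsto (fun t : ℝ => Real.sqrt (1 - 1/t)) atTop (𝓝 1) := by
    have := (Real.continuous_sqrt.tendsto 1).comp l0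
    simpa [Function.comp_def] using this
  have l2 : Tendsto (fun t : ℝ => 1 + Real.sqrt (1 - 1/t)) atTop (𝓝 2) := by
    have h2 := (tendsto_const_nhds (x := (1:ℝ)) (f := (atTop : Filter ℝ))).add l1
    norm_num at h2 ⊢
    exact h2
  have l3 : Tendsto (fun t : ℝ => 2 * Real.log (1 + Real.sqrt (1 - 1/t))) atTop
      (𝓝 (2 * Real.log 2)) :=
    (((Real.continuousAt_log (by norm_num)).tendsto.comp l2)).const_mul 2
  refine l3.congr' ?_
  filter_upwards [eventually_gt_atTop 1] with t ht
  have ht0 : (0:ℝ) < t := by linarith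
  have ht1 : (0:ℝ) < t - 1 := by linarith
  have hs : Real.sqrt t + Real.sqrt (t-1) = Real.sqrt t * (1 + Real.sqrt (1 - 1/t)) := by
    rw [mul_add, mul_one, ← Real.sqrt_mul ht0.le]
    congr 2
    field_simp
  have hpos : (0:ℝ) < 1 + Real.sqrt (1 - 1/t) := by positivity
  have ha0 : 0 < Real.sqrt t := Real.sqrt_pos.mpr ht0
  show 2 * Real.log (1 + Real.sqrt (1 - 1/t)) = φ t
  simp only [φ]
  rw [hs, Real.log_mul ha0.ne' hpos.ne', Real.log_sqrt ht0.le]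
  ring

lemma phi_cont : ContinuousWithinAt φ (Ici 1) 1 := by
  have c1 : ContinuousAt (fun x : ℝ => Real.sqrt x + Real.sqrt (x-1)) 1 := by
    fun_prop
  have hval : Real.sqrt 1 + Real.sqrt (1-1) = 1 := by simp
  have c2 : ContinuousAt φ 1 := by
    refine ContinuousAt.sub (continuousAt_const.mul (ContinuousAt.log c1 ?_))
      (Real.continuousAt_log (by norm_num))
    rw [hval]; norm_num
  exact c2.continuousWithinAt

lemma int_shift_rpow_val {c d : ℝ} (h : c ≤ d) :
    ∫ u in Ioo c d, (u - c) ^ (-(1/2:ℝ)) = 2 * Real.sqrt (d - c) := by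
  rw [← integral_Ioc_eq_integral_Ioo, ← intervalIntegral.integral_of_le h,
    intervalIntegral.integral_comp_sub_right (fun x => x ^ (-(1/2:ℝ))) c,
    integral_rpow (Or.inl (by norm_num)), sub_self,
    Real.zero_rpow (by norm_num), Real.sqrt_eq_rpow]
  norm_num
  ring

lemma rpow_val {c d : ℝ} (h0 : 0 ≤ c) (h : c ≤ d) :
    ∫ u in Ioo c d, u ^ (-(1/2:ℝ)) = 2 * Real.sqrt d - 2 * Real.sqrt c := by
  rw [← integral_Ioc_eq_integral_Ioo, ← intervalIntegral.integral_of_le h,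
    integral_rpow (Or.inl (by norm_num)),
    Real.sqrt_eq_rpow, Real.sqrt_eq_rpow]
  norm_num
  ring

-- the B integrand is integrable
lemma IB {s : ℝ} (hs0 : 0 < s) (hs2 : s < 1/2) :
    IntegrableOn (fun u : ℝ => (u * (u - s)) ^ (-(1/2:ℝ))) (Ioo s (1/2)) := by
  have hdom : IntegrableOn (fun u : ℝ => (Real.sqrt s)⁻¹ * (u - s) ^ (-(1/2:ℝ))) (Ioo s (1/2)) :=
    (int_shift_rpow s (1/2) hs2.le).const_mul _
  refine hdom.mono' ((by fun_prop : Measurable fun u : ℝ => (u * (u - s)) ^ (-(1/2:ℝ)))).aestronglyMeasurable ?_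
  filter_upwards [ae_restrict_mem measurableSet_Ioo] with u hu
  have hu0 : 0 < u := hs0.trans hu.1
  have hus : 0 < u - s := sub_pos.mpr hu.1
  rw [Real.norm_eq_abs, abs_of_nonneg (Real.rpow_nonneg (by positivity) _)]
  rw [rpow_neg_half_eq (by positivity), rpow_neg_half_eq hus.le,
    Real.sqrt_mul hu0.le, mul_inv]
  exact mul_le_mul_of_nonneg_right
    (inv_anti₀ (Real.sqrt_pos.mpr hs0) (Real.sqrt_le_sqrt hu.1.le)) (by positivity)

lemma psi_deriv {s x : ℝ} (hs0 : 0 < s) (hx : s < x) :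
    HasDerivAt (fun u => 2 * Real.log (Real.sqrt u + Real.sqrt (u - s)))
      ((x * (x - s)) ^ (-(1/2:ℝ))) x := by
  have hx0 : (0:ℝ) < x := hs0.trans hx
  have hxs : (0:ℝ) < x - s := sub_pos.mpr hx
  have ha0 : 0 < Real.sqrt x := Real.sqrt_pos.mpr hx0
  have hb0 : 0 < Real.sqrt (x - s) := Real.sqrt_pos.mpr hxs
  have h1 : HasDerivAt (fun u : ℝ => Real.sqrt u) (1/(2*Real.sqrt x)) x :=
    Real.hasDerivAt_sqrt hx0.ne'
  have h2 : HasDerivAt (fun u : ℝ => Real.sqrt (u - s)) (1/(2*Real.sqrt (x - s))) x := by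
    have := (Real.hasDerivAt_sqrt hxs.ne').comp x ((hasDerivAt_id x).sub_const s)
    simpa [Function.comp_def] using this
  have hne : Real.sqrt x + Real.sqrt (x - s) ≠ 0 := by positivity
  have hlog := ((h1.add h2).log hne).const_mul 2
  refine hlog.congr_deriv ?_
  symm
  simp only [Pi.add_apply]
  rw [rpow_neg_half_eq (by positivity), Real.sqrt_mul hx0.le]
  field_simp
  ring

lemma B_eval {s : ℝ} (hs0 : 0 < s) (hs2 : s < 1/2) :
    ∫ u in Ioo s (1/2:ℝ), (u * (u - s)) ^ (-(1/2:ℝ))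
      = 2 * Real.log (Real.sqrt (1/2) + Real.sqrt (1/2 - s)) - Real.log s := by
  set ψ : ℝ → ℝ := fun u => 2 * Real.log (Real.sqrt u + Real.sqrt (u - s)) with hψ
  have hcont : ContinuousOn ψ (Icc s (1/2)) := by
    have c0 : Continuous fun u : ℝ => Real.sqrt u + Real.sqrt (u - s) := by fun_prop
    refine continuousOn_const.mul (c0.continuousOn.log ?_)
    intro x hx
    have : 0 < Real.sqrt x := Real.sqrt_pos.mpr (hs0.trans_le hx.1)
    positivity
  have hderiv : ∀ x ∈ Ioo s (1/2:ℝ),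
      HasDerivWithinAt ψ ((x * (x - s)) ^ (-(1/2:ℝ))) (Ioi x) x :=
    fun x hx => (psi_deriv hs0 hx.1).hasDerivWithinAt
  have hint : IntervalIntegrable (fun u : ℝ => (u * (u - s)) ^ (-(1/2:ℝ))) volume s (1/2) :=
    (intervalIntegrable_iff_integrableOn_Ioo_of_le hs2.le).mpr (IB hs0 hs2)
  have := intervalIntegral.integral_eq_sub_of_hasDeriv_right_of_le hs2.le hcont hderiv hint
  rw [← integral_Ioc_eq_integral_Ioo, ← intervalIntegral.integral_of_le hs2.le, this, hψ]
  simp only [sub_self, Real.sqrt_zero, add_zero]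
  rw [Real.log_sqrt hs0.le]
  ring

-- ### new material
lemma g_nonneg {u : ℝ} (hu0 : 0 < u) (hu1 : u < 1) : 0 ≤ (1 - u) ^ (-(1/2:ℝ)) - 1 :=
  sub_nonneg.mpr (one_le_fac hu0 hu1)

lemma g_le {u : ℝ} (hu0 : 0 < u) (hu2 : u ≤ 1/2) : (1 - u) ^ (-(1/2:ℝ)) - 1 ≤ u := by
  have := key_ineq hu0 hu2
  linarith

lemma f1_nonneg {u : ℝ} (hu : u ∈ Ioo (0:ℝ) (1/2)) :
    0 ≤ u⁻¹ * ((1 - u) ^ (-(1/2:ℝ)) - 1) :=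
  mul_nonneg (inv_nonneg.mpr hu.1.le) (g_nonneg hu.1 (by linarith [hu.2]))

lemma f1_le_one {u : ℝ} (hu : u ∈ Ioo (0:ℝ) (1/2)) :
    u⁻¹ * ((1 - u) ^ (-(1/2:ℝ)) - 1) ≤ 1 := by
  calc u⁻¹ * ((1 - u) ^ (-(1/2:ℝ)) - 1) ≤ u⁻¹ * u :=
        mul_le_mul_of_nonneg_left (g_le hu.1 hu.2.le) (inv_nonneg.mpr hu.1.le)
    _ = 1 := inv_mul_cancel₀ hu.1.ne'

-- pointwise: 1/u ≤ (u(u-s))^{-1/2}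
lemma inv_le_Bint {s u : ℝ} (hs0 : 0 < s) (hu : s < u) :
    u⁻¹ ≤ (u * (u - s)) ^ (-(1/2:ℝ)) := by
  have hu0 : 0 < u := hs0.trans hu
  have hus : 0 < u - s := sub_pos.mpr hu
  rw [rpow_neg_half_eq (by positivity), Real.sqrt_mul hu0.le]
  rw [show u⁻¹ = (Real.sqrt u * Real.sqrt u)⁻¹ by rw [Real.mul_self_sqrt hu0.le]]
  have h1 : Real.sqrt (u - s) ≤ Real.sqrt u := Real.sqrt_le_sqrt (by linarith)
  have h2 : 0 < Real.sqrt (u - s) := Real.sqrt_pos.mpr hus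
  apply inv_anti₀ (by positivity)
  exact mul_le_mul_of_nonneg_left h1 (Real.sqrt_nonneg u)

-- integrability of the A integrand
lemma IA {s : ℝ} (hs0 : 0 < s) (hs2 : s < 1/2) :
    IntegrableOn (fun u : ℝ => (u * (u - s)) ^ (-(1/2:ℝ)) * ((1 - u) ^ (-(1/2:ℝ)) - 1))
      (Ioo s (1/2)) := by
  refine (IB hs0 hs2).mono'
    ((by fun_prop : Measurable fun u : ℝ =>
      (u * (u - s)) ^ (-(1/2:ℝ)) * ((1 - u) ^ (-(1/2:ℝ)) - 1))).aestronglyMeasurable ?_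
  filter_upwards [ae_restrict_mem measurableSet_Ioo] with u hu
  have hu0 : 0 < u := hs0.trans hu.1
  have hB : (0:ℝ) ≤ (u * (u - s)) ^ (-(1/2:ℝ)) := Real.rpow_nonneg (by nlinarith [hu.1]) _
  have hg0 : 0 ≤ (1 - u) ^ (-(1/2:ℝ)) - 1 := g_nonneg hu0 (by linarith [hu.2])
  have hg1 : (1 - u) ^ (-(1/2:ℝ)) - 1 ≤ 1 := le_trans (g_le hu0 hu.2.le) (by linarith [hu.2])
  rw [Real.norm_eq_abs, abs_of_nonneg (mul_nonneg hB hg0)]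
  calc (u * (u - s)) ^ (-(1/2:ℝ)) * ((1 - u) ^ (-(1/2:ℝ)) - 1)
      ≤ (u * (u - s)) ^ (-(1/2:ℝ)) * 1 := mul_le_mul_of_nonneg_left hg1 hB
    _ = (u * (u - s)) ^ (-(1/2:ℝ)) := mul_one _

lemma A0_split {s : ℝ} (hs0 : 0 < s) (hs2 : s < 1/2) :
    ∫ t in Ioo (0:ℝ) (1/2), t⁻¹ * ((1 - t) ^ (-(1/2 : ℝ)) - 1)
      = (∫ t in Ioo (0:ℝ) s, t⁻¹ * ((1 - t) ^ (-(1/2 : ℝ)) - 1))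
        + ∫ t in Ioo s (1/2:ℝ), t⁻¹ * ((1 - t) ^ (-(1/2 : ℝ)) - 1) := by
  have hu : Ioo (0:ℝ) (1/2) = Ioo 0 s ∪ Ico s (1/2) :=
    (Set.Ioo_union_Ico_eq_Ioo hs0 hs2.le).symm
  have hdisj : Disjoint (Ioo (0:ℝ) s) (Ico s (1/2)) :=
    Set.disjoint_left.mpr fun x hx hx' => absurd hx.2 (not_lt.mpr hx'.1)
  have h1 : IntegrableOn (fun t : ℝ => t⁻¹ * ((1 - t) ^ (-(1/2 : ℝ)) - 1)) (Ioo 0 s) :=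
    int1.mono_set (Set.Ioo_subset_Ioo_right hs2.le)
  have h2 : IntegrableOn (fun t : ℝ => t⁻¹ * ((1 - t) ^ (-(1/2 : ℝ)) - 1)) (Ico s (1/2)) :=
    (int1.mono_set (Set.Ioo_subset_Ioo_left hs0.le)).congr_set_ae Ioo_ae_eq_Ico.symm
  rw [hu, setIntegral_union hdisj measurableSet_Ico h1 h2, integral_Ico_eq_integral_Ioo]

lemma A_lower {s : ℝ} (hs0 : 0 < s) (hs2 : s < 1/2) :
    (∫ t in Ioo (0:ℝ) (1/2), t⁻¹ * ((1 - t) ^ (-(1/2 : ℝ)) - 1)) - s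
      ≤ ∫ u in Ioo s (1/2:ℝ), (u * (u - s)) ^ (-(1/2:ℝ)) * ((1 - u) ^ (-(1/2:ℝ)) - 1) := by
  have h1 : ∫ t in Ioo (0:ℝ) s, t⁻¹ * ((1 - t) ^ (-(1/2 : ℝ)) - 1) ≤ s := by
    have hmono := setIntegral_mono_on
      (int1.mono_set (Set.Ioo_subset_Ioo_right hs2.le))
      ((integrableOn_const_iff (C := (1:ℝ))).mpr (Or.inr (by simp)))
      measurableSet_Ioo
      (fun x hx => f1_le_one ⟨hx.1, hx.2.trans hs2⟩)
    calc ∫ t in Ioo (0:ℝ) s, t⁻¹ * ((1 - t) ^ (-(1/2 : ℝ)) - 1)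
        ≤ ∫ _ in Ioo (0:ℝ) s, (1:ℝ) := hmono
      _ = s := by simp [Real.volume_Ioo, hs0.le]
  have h2 : ∫ t in Ioo s (1/2:ℝ), t⁻¹ * ((1 - t) ^ (-(1/2 : ℝ)) - 1)
      ≤ ∫ u in Ioo s (1/2:ℝ), (u * (u - s)) ^ (-(1/2:ℝ)) * ((1 - u) ^ (-(1/2:ℝ)) - 1) := by
    refine setIntegral_mono_on (int1.mono_set (Set.Ioo_subset_Ioo_left hs0.le)) (IA hs0 hs2)
      measurableSet_Ioo (fun u hu => ?_)
    have hu0 : 0 < u := hs0.trans hu.1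
    exact mul_le_mul_of_nonneg_right (inv_le_Bint hs0 hu.1)
      (g_nonneg hu0 (by linarith [hu.2]))
  linarith [A0_split hs0 hs2]

lemma pointwise_upper {s u : ℝ} (hs0 : 0 < s) (hu : u ∈ Ioo s (1/2:ℝ)) :
    (u * (u - s)) ^ (-(1/2:ℝ)) * ((1 - u) ^ (-(1/2:ℝ)) - 1)
      ≤ u⁻¹ * ((1 - u) ^ (-(1/2:ℝ)) - 1)
        + Real.sqrt (1/2) * ((u - s) ^ (-(1/2:ℝ)) - u ^ (-(1/2:ℝ))) := by
  have hu0 : 0 < u := hs0.trans hu.1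
  have hus : 0 < u - s := sub_pos.mpr hu.1
  set a := Real.sqrt u with hadef
  set b := Real.sqrt (u - s) with hbdef
  set w := Real.sqrt (1/2) with hwdef
  set G := (1 - u) ^ (-(1/2:ℝ)) - 1 with hGdef
  have ha0 : 0 < a := Real.sqrt_pos.mpr hu0
  have hb0 : 0 < b := Real.sqrt_pos.mpr hus
  have ha2 : a ^ 2 = u := Real.sq_sqrt hu0.le
  have hba : b ≤ a := Real.sqrt_le_sqrt (by linarith)
  have haw : a ≤ w := Real.sqrt_le_sqrt hu.2.le
  have hG0 : 0 ≤ G := g_nonneg hu0 (by linarith [hu.2])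
  have hGu : G ≤ u := g_le hu0 hu.2.le
  rw [rpow_neg_half_eq (by positivity), rpow_neg_half_eq hus.le, rpow_neg_half_eq hu0.le,
    Real.sqrt_mul hu0.le, ← hadef, ← hbdef]
  rw [show u⁻¹ = ((a:ℝ)^2)⁻¹ by rw [ha2]]
  have e1 : (a * b)⁻¹ * G = (a * G) / (a^2 * b) := by
    field_simp
  have e2 : ((a:ℝ)^2)⁻¹ * G + w * (b⁻¹ - a⁻¹) = (b * G + w * a * (a - b)) / (a^2 * b) := by
    field_simp
  rw [e1, e2, div_le_div_iff_of_pos_right (by positivity)]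
  nlinarith [mul_nonneg hG0 (sub_nonneg.mpr hba), mul_nonneg (sub_nonneg.mpr hba) (sub_nonneg.mpr haw)]

lemma A_upper {s : ℝ} (hs0 : 0 < s) (hs2 : s < 1/2) :
    (∫ u in Ioo s (1/2:ℝ), (u * (u - s)) ^ (-(1/2:ℝ)) * ((1 - u) ^ (-(1/2:ℝ)) - 1))
      ≤ (∫ t in Ioo (0:ℝ) (1/2), t⁻¹ * ((1 - t) ^ (-(1/2 : ℝ)) - 1)) + 2 * Real.sqrt s := by
  have hf1 : IntegrableOn (fun t : ℝ => t⁻¹ * ((1 - t) ^ (-(1/2 : ℝ)) - 1)) (Ioo s (1/2)) :=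
    int1.mono_set (Set.Ioo_subset_Ioo_left hs0.le)
  have hshift : IntegrableOn (fun u : ℝ => (u - s) ^ (-(1/2:ℝ))) (Ioo s (1/2)) :=
    int_shift_rpow s (1/2) hs2.le
  have hupow : IntegrableOn (fun u : ℝ => u ^ (-(1/2:ℝ))) (Ioo s (1/2)) :=
    (intervalIntegrable_iff_integrableOn_Ioo_of_le hs2.le).mp
      (intervalIntegral.intervalIntegrable_rpow' (by norm_num))
  have hRHS : IntegrableOn (fun u : ℝ => u⁻¹ * ((1 - u) ^ (-(1/2:ℝ)) - 1)
      + Real.sqrt (1/2) * ((u - s) ^ (-(1/2:ℝ)) - u ^ (-(1/2:ℝ)))) (Ioo s (1/2)) :=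
    hf1.add (((hshift.sub hupow)).const_mul _)
  have hmono := setIntegral_mono_on (IA hs0 hs2) hRHS measurableSet_Ioo
    (fun u hu => pointwise_upper hs0 hu)
  have hsplit : ∫ u in Ioo s (1/2:ℝ), (u⁻¹ * ((1 - u) ^ (-(1/2:ℝ)) - 1)
      + Real.sqrt (1/2) * ((u - s) ^ (-(1/2:ℝ)) - u ^ (-(1/2:ℝ))))
      = (∫ u in Ioo s (1/2:ℝ), u⁻¹ * ((1 - u) ^ (-(1/2:ℝ)) - 1))
        + Real.sqrt (1/2) * ((∫ u in Ioo s (1/2:ℝ), (u - s) ^ (-(1/2:ℝ)))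
          - ∫ u in Ioo s (1/2:ℝ), u ^ (-(1/2:ℝ))) := by
    have hcomb : IntegrableOn (fun u : ℝ => Real.sqrt (1/2)
        * ((u - s) ^ (-(1/2:ℝ)) - u ^ (-(1/2:ℝ)))) (Ioo s (1/2)) := by
      exact (hshift.sub hupow).const_mul _
    rw [integral_add hf1 hcomb, integral_const_mul, integral_sub hshift hupow]
  have hvals : (∫ u in Ioo s (1/2:ℝ), (u - s) ^ (-(1/2:ℝ)))
        - (∫ u in Ioo s (1/2:ℝ), u ^ (-(1/2:ℝ)))
      = 2 * Real.sqrt (1/2 - s) - (2 * Real.sqrt (1/2) - 2 * Real.sqrt s) := by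
    rw [int_shift_rpow_val hs2.le, rpow_val hs0.le hs2.le]
  have hbound : Real.sqrt (1/2) * (2 * Real.sqrt (1/2 - s) - (2 * Real.sqrt (1/2) - 2 * Real.sqrt s))
      ≤ 2 * Real.sqrt s := by
    have h1 : Real.sqrt (1/2 - s) ≤ Real.sqrt (1/2) := Real.sqrt_le_sqrt (by linarith)
    have h2 : Real.sqrt (1/2) ≤ 1 := by
      rw [show (1:ℝ) = Real.sqrt 1 by simp]
      exact Real.sqrt_le_sqrt (by norm_num)
    have h3 : (0:ℝ) ≤ Real.sqrt s := Real.sqrt_nonneg s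
    have h4 : (0:ℝ) ≤ Real.sqrt (1/2) := Real.sqrt_nonneg _
    nlinarith
  have hfirst : (∫ u in Ioo s (1/2:ℝ), u⁻¹ * ((1 - u) ^ (-(1/2:ℝ)) - 1))
      ≤ ∫ t in Ioo (0:ℝ) (1/2), t⁻¹ * ((1 - t) ^ (-(1/2 : ℝ)) - 1) := by
    have hnn : 0 ≤ ∫ t in Ioo (0:ℝ) s, t⁻¹ * ((1 - t) ^ (-(1/2 : ℝ)) - 1) :=
      setIntegral_nonneg measurableSet_Ioo (fun x hx => f1_nonneg ⟨hx.1, hx.2.trans hs2⟩)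
    linarith [A0_split hs0 hs2]
  calc (∫ u in Ioo s (1/2:ℝ), (u * (u - s)) ^ (-(1/2:ℝ)) * ((1 - u) ^ (-(1/2:ℝ)) - 1))
      ≤ _ := hmono
    _ = (∫ u in Ioo s (1/2:ℝ), u⁻¹ * ((1 - u) ^ (-(1/2:ℝ)) - 1))
        + Real.sqrt (1/2) * ((∫ u in Ioo s (1/2:ℝ), (u - s) ^ (-(1/2:ℝ)))
          - ∫ u in Ioo s (1/2:ℝ), u ^ (-(1/2:ℝ))) := hsplit
    _ ≤ (∫ t in Ioo (0:ℝ) (1/2), t⁻¹ * ((1 - t) ^ (-(1/2 : ℝ)) - 1)) + 2 * Real.sqrt s := by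
        rw [hvals]
        linarith [hbound, hfirst]

lemma J_eval : ∫ t in Ioi (1:ℝ), t ^ (-(1/2:ℝ)) * ((t-1) ^ (-(1/2:ℝ)) - t ^ (-(1/2:ℝ)))
    = 2 * Real.log 2 := by
  have h := integral_Ioi_of_hasDerivAt_of_tendsto phi_cont
    (fun x hx => phi_deriv hx) int2 phi_tendsto
  rw [h]
  simp [φ]

lemma F_split {s : ℝ} (hs0 : 0 < s) (hs2 : s < 1/2) :
    ∫ u in Ioo s (1/2:ℝ), (u * (u - s) * (1 - u)) ^ (-(1/2:ℝ))
      = (∫ u in Ioo s (1/2:ℝ), (u * (u - s)) ^ (-(1/2:ℝ)) * ((1 - u) ^ (-(1/2:ℝ)) - 1))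
        + ∫ u in Ioo s (1/2:ℝ), (u * (u - s)) ^ (-(1/2:ℝ)) := by
  rw [← integral_add (IA hs0 hs2) (IB hs0 hs2)]
  refine setIntegral_congr_fun measurableSet_Ioo fun u hu => ?_
  have hu0 : 0 < u := hs0.trans hu.1
  have hus : 0 < u - s := sub_pos.mpr hu.1
  have h : (u * (u - s) * (1 - u)) ^ (-(1/2:ℝ))
      = (u * (u - s)) ^ (-(1/2:ℝ)) * (1 - u) ^ (-(1/2:ℝ)) :=
    Real.mul_rpow (by positivity) (by linarith [hu.2])
  rw [h]
  ring

theorem stmt_14 :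
    IntegrableOn (fun t : ℝ => t⁻¹ * ((1 - t) ^ (-(1/2 : ℝ)) - 1))
      (Set.Ioo (0:ℝ) (1/2)) ∧
    IntegrableOn
      (fun t : ℝ => t ^ (-(1/2 : ℝ)) * ((t - 1) ^ (-(1/2 : ℝ)) - t ^ (-(1/2 : ℝ))))
      (Set.Ioi 1) ∧
    Filter.Tendsto
      (fun s : ℝ =>
        (∫ u in Set.Ioo s (1/2 : ℝ), (u * (u - s) * (1 - u)) ^ (-(1/2 : ℝ)))
          + Real.log s)
      (nhdsWithin 0 (Set.Ioi 0))
      (nhds ((∫ t in Set.Ioo (0:ℝ) (1/2), t⁻¹ * ((1 - t) ^ (-(1/2 : ℝ)) - 1))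
        + (∫ t in Set.Ioi (1:ℝ),
            t ^ (-(1/2 : ℝ)) * ((t - 1) ^ (-(1/2 : ℝ)) - t ^ (-(1/2 : ℝ))))
        - Real.log 2)) := by
  refine ⟨int1, int2, ?_⟩
  set A₀ := ∫ t in Ioo (0:ℝ) (1/2), t⁻¹ * ((1 - t) ^ (-(1/2 : ℝ)) - 1) with hA₀
  have hAlim : Tendsto (fun s : ℝ =>
      ∫ u in Ioo s (1/2:ℝ), (u * (u - s)) ^ (-(1/2:ℝ)) * ((1 - u) ^ (-(1/2:ℝ)) - 1))
      (𝓝[>] (0:ℝ)) (𝓝 A₀) := by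
    apply tendsto_of_tendsto_of_tendsto_of_le_of_le' (g := fun s : ℝ => A₀ - s)
      (h := fun s : ℝ => A₀ + 2 * Real.sqrt s)
    · have : Tendsto (fun s : ℝ => A₀ - s) (𝓝 (0:ℝ)) (𝓝 (A₀ - 0)) :=
        (continuous_const.sub continuous_id).tendsto 0
      simpa using this.mono_left nhdsWithin_le_nhds
    · have : Tendsto (fun s : ℝ => A₀ + 2 * Real.sqrt s) (𝓝 (0:ℝ))
          (𝓝 (A₀ + 2 * Real.sqrt 0)) :=
        (continuous_const.add (continuous_const.mul Real.continuous_sqrt)).tendsto 0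
      simpa using this.mono_left nhdsWithin_le_nhds
    · filter_upwards [Ioo_mem_nhdsGT one_half_pos] with s hs
      exact A_lower hs.1 hs.2
    · filter_upwards [Ioo_mem_nhdsGT one_half_pos] with s hs
      exact A_upper hs.1 hs.2
  have hBlim : Tendsto (fun s : ℝ => 2 * Real.log (Real.sqrt (1/2) + Real.sqrt (1/2 - s)))
      (𝓝[>] (0:ℝ)) (𝓝 (Real.log 2)) := by
    have hpos : 0 < Real.sqrt (1/2) := Real.sqrt_pos.mpr (by norm_num)
    have hcont : ContinuousAt (fun s : ℝ =>
        2 * Real.log (Real.sqrt (1/2) + Real.sqrt (1/2 - s))) 0 := by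
      refine continuousAt_const.mul (ContinuousAt.log (by fun_prop) ?_)
      have h2 : 0 ≤ Real.sqrt (1/2 - 0) := Real.sqrt_nonneg _
      positivity
    have h : Tendsto (fun s : ℝ => 2 * Real.log (Real.sqrt (1/2) + Real.sqrt (1/2 - s)))
        (𝓝[>] (0:ℝ)) (𝓝 (2 * Real.log (Real.sqrt (1/2) + Real.sqrt (1/2 - 0)))) :=
      hcont.tendsto.mono_left nhdsWithin_le_nhds
    have hval : 2 * Real.log (Real.sqrt (1/2) + Real.sqrt (1/2 - 0)) = Real.log 2 := by
      rw [sub_zero, ← two_mul]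
      have h2 : Real.sqrt 2 * Real.sqrt 2 = 2 := Real.mul_self_sqrt (by norm_num)
      have hsq : (2:ℝ) * Real.sqrt (1/2) = Real.sqrt 2 := by
        rw [show (1:ℝ)/2 = 2⁻¹ by norm_num, Real.sqrt_inv, mul_inv_eq_iff_eq_mul₀
          (by positivity : Real.sqrt 2 ≠ 0), h2]
      rw [hsq, Real.log_sqrt (by norm_num : (0:ℝ) ≤ 2)]
      ring
    rw [hval] at h
    exact h
  have hmain := hAlim.add hBlim
  refine Tendsto.congr' ?_ (by
    have heq : A₀ + 2 * Real.log 2 - Real.log 2 = A₀ + Real.log 2 := by ring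
    rw [J_eval, heq]
    exact hmain)
  filter_upwards [Ioo_mem_nhdsGT one_half_pos] with s hs
  rw [F_split hs.1 hs.2, B_eval hs.1 hs.2]
  ring
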